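/- arXiv:2308.01106 — 6 statements merged into one kernel-verified Lean document; each statement's English description precedes it below -/
import Mathlib

section
/- Let G be a torsion-free abelian group and let α₁,…,α_q be elements of G. Suppose the q-tuple (α₁,…,α_q) has the property (P_{r,s}) with q ≥ r > s ≥ 1, i.e., for any r indices l(1)<…<l(r) in {1,…,q} and any s distinct indices i₁,…,i_s ∈ {1,…,r}, there exist distinct indices j₁,…,j_s ∈ {1,…,r} with {j₁,…,j_s} ≠ {i₁,…,i_s} such that α_{l(i₁)}·…·α_{l(i_s)} = α_{l(j₁)}·…·α_{l(j_s)}. Then there exist (q−r+2) distinct indices i₁,…,i_{q−r+2} ∈ {1,…,q} such that α_{i₁} = α_{i₂} = … = α_{i_{q−r+2}}. -/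
/-- The key combinatorial lemma, in a linearly ordered abelian group: if every `r`-subset's
`s`-sums are never uniquely minimized, then some value is attained `q - r + 2` times. -/
lemma key_lemma {M : Type*} [AddCommGroup M] [LinearOrder M] [IsOrderedAddMonoid M] {q r s : ℕ}
    (hs : 1 ≤ s) (hsr : s < r) (hrq : r ≤ q) (γ : Fin q → M)
    (hγ : ∀ T : Finset (Fin q), T.card = r → ∀ I ⊆ T, I.card = s →
      ∃ J ⊆ T, J.card = s ∧ J ≠ I ∧ ∑ i ∈ I, γ i = ∑ j ∈ J, γ j) :
    ∃ S : Finset (Fin q), S.card = q - r + 2 ∧ ∀ i ∈ S, ∀ j ∈ S, γ i = γ j := by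
  classical
  by_contra hcon
  push_neg at hcon
  -- every fiber is small
  have hfiber : ∀ i : Fin q,
      (Finset.univ.filter (fun j => γ j = γ i)).card ≤ q - r + 1 := by
    intro i
    by_contra h
    push_neg at h
    obtain ⟨S, hS, hScard⟩ := Finset.exists_subset_card_eq (show q - r + 2 ≤ _ from h)
    obtain ⟨x, hx, y, hy, hxy⟩ := hcon S hScard
    have hxv : γ x = γ i := (Finset.mem_filter.mp (hS hx)).2
    have hyv : γ y = γ i := (Finset.mem_filter.mp (hS hy)).2
    exact hxy (hxv.trans hyv.symm)
  -- choose an s-subset I minimizing the sum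
  have hne : (Finset.powersetCard s (Finset.univ : Finset (Fin q))).Nonempty := by
    obtain ⟨I, hI, hIc⟩ := Finset.exists_subset_card_eq
      (show s ≤ (Finset.univ : Finset (Fin q)).card by simp; omega)
    exact ⟨I, Finset.mem_powersetCard.mpr ⟨hI, hIc⟩⟩
  obtain ⟨I, hImem, hImin⟩ := Finset.exists_min_image _ (fun I => ∑ i ∈ I, γ i) hne
  have hIcard : I.card = s := (Finset.mem_powersetCard.mp hImem).2
  have hIne : I.Nonempty := Finset.card_pos.mp (by omega)
  obtain ⟨i₀, hi₀I, hi₀max⟩ := Finset.exists_max_image I γ hIne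
  set v := γ i₀ with hv
  -- everything outside I has value ≥ v
  have hout : ∀ j, j ∉ I → v ≤ γ j := by
    intro j hj
    by_contra h
    push_neg at h
    have hjer : j ∉ I.erase i₀ := fun hm => hj (Finset.mem_of_mem_erase hm)
    have hI'card : (insert j (I.erase i₀)).card = s := by
      rw [Finset.card_insert_of_notMem hjer, Finset.card_erase_of_mem hi₀I, hIcard]
      omega
    have hI'sum : ∑ i ∈ insert j (I.erase i₀), γ i < ∑ i ∈ I, γ i := by
      rw [Finset.sum_insert hjer, ← Finset.add_sum_erase I γ hi₀I]
      exact add_lt_add_left h _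
    have := hImin (insert j (I.erase i₀))
      (Finset.mem_powersetCard.mpr ⟨Finset.subset_univ _, hI'card⟩)
    exact absurd this (not_le.mpr hI'sum)
  -- count indices outside I with value strictly greater than v
  have hsub : (Finset.univ \ I).filter (fun j => γ j = v) ⊆
      (Finset.univ.filter (fun j => γ j = γ i₀)).erase i₀ := by
    intro x hx
    simp only [Finset.mem_filter, Finset.mem_sdiff] at hx
    exact Finset.mem_erase.mpr ⟨fun h => hx.1.2 (h ▸ hi₀I),
      Finset.mem_filter.mpr ⟨Finset.mem_univ _, hx.2⟩⟩
  have hBcard : ((Finset.univ \ I).filter (fun j => γ j = v)).card ≤ q - r := by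
    have hcle := Finset.card_le_card hsub
    have h2 : ((Finset.univ.filter (fun j => γ j = γ i₀)).erase i₀).card
        = (Finset.univ.filter (fun j => γ j = γ i₀)).card - 1 :=
      Finset.card_erase_of_mem (Finset.mem_filter.mpr ⟨Finset.mem_univ _, rfl⟩)
    have h3 := hfiber i₀
    have h4 : 1 ≤ (Finset.univ.filter (fun j => γ j = γ i₀)).card :=
      Finset.card_pos.mpr ⟨i₀, Finset.mem_filter.mpr ⟨Finset.mem_univ _, rfl⟩⟩
    omega
  have hpart : ((Finset.univ \ I).filter (fun j => γ j = v)).card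
      + ((Finset.univ \ I).filter (fun j => v < γ j)).card = q - s := by
    rw [← Finset.card_union_of_disjoint]
    · have hU : ((Finset.univ \ I).filter (fun j => γ j = v))
          ∪ ((Finset.univ \ I).filter (fun j => v < γ j)) = Finset.univ \ I := by
        apply Finset.Subset.antisymm
        · exact Finset.union_subset (Finset.filter_subset _ _) (Finset.filter_subset _ _)
        · intro x hx
          rcases eq_or_lt_of_le (hout x (Finset.mem_sdiff.mp hx).2) with h | h
          · exact Finset.mem_union_left _ (Finset.mem_filter.mpr ⟨hx, h.symm⟩)
          · exact Finset.mem_union_right _ (Finset.mem_filter.mpr ⟨hx, h⟩)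
      rw [hU, Finset.card_sdiff_of_subset (Finset.subset_univ I), hIcard, Finset.card_univ,
        Fintype.card_fin]
    · refine Finset.disjoint_left.mpr ?_
      intro x hx hx'
      have h1 := (Finset.mem_filter.mp hx).2
      have h2 := (Finset.mem_filter.mp hx').2
      rw [h1] at h2
      exact lt_irrefl v h2
  have hC0 : r - s ≤ ((Finset.univ \ I).filter (fun j => v < γ j)).card := by omega
  obtain ⟨C, hCsub, hCcard⟩ := Finset.exists_subset_card_eq hC0
  have hCI : Disjoint I C := by
    refine Finset.disjoint_left.mpr ?_
    intro x hx hxC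
    exact (Finset.mem_sdiff.mp (Finset.mem_filter.mp (hCsub hxC)).1).2 hx
  have hTcard : (I ∪ C).card = r := by
    rw [Finset.card_union_of_disjoint hCI, hIcard, hCcard]; omega
  obtain ⟨J, hJT, hJcard, hJne, hsum⟩ := hγ (I ∪ C) hTcard I Finset.subset_union_left hIcard
  -- derive a contradiction from ∑_I γ = ∑_J γ
  have hd : (I \ J).card = (J \ I).card := Finset.card_sdiff_comm (by rw [hIcard, hJcard])
  have hPne : (J \ I).Nonempty := by
    rw [Finset.sdiff_nonempty]
    intro hJI
    exact hJne (Finset.eq_of_subset_of_card_le hJI (by rw [hIcard, hJcard]))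
  have h1 : ∑ x ∈ I \ J, γ x ≤ (I \ J).card • v :=
    Finset.sum_le_card_nsmul _ _ _ (fun x hx => hi₀max x (Finset.mem_sdiff.mp hx).1)
  have h2 : (J \ I).card • v < ∑ x ∈ J \ I, γ x := by
    have hall : ∀ x ∈ J \ I, v < γ x := by
      intro x hx
      have hxT := hJT (Finset.mem_sdiff.mp hx).1
      have hxI := (Finset.mem_sdiff.mp hx).2
      have hxC : x ∈ C := (Finset.mem_union.mp hxT).resolve_left hxI
      exact (Finset.mem_filter.mp (hCsub hxC)).2
    calc (J \ I).card • v = ∑ _x ∈ J \ I, v := (Finset.sum_const v).symm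
    _ < ∑ x ∈ J \ I, γ x := Finset.sum_lt_sum_of_nonempty hPne hall
  have hlt : ∑ x ∈ I \ J, γ x < ∑ x ∈ J \ I, γ x := h1.trans_lt (by rw [hd]; exact h2)
  have heq : ∑ x ∈ I \ J, γ x = ∑ x ∈ J \ I, γ x :=
    Finset.sum_sdiff_eq_sum_sdiff_iff.mpr hsum
  exact absurd heq (ne_of_lt hlt)

/-- Property `(P_{r,s})` of a `q`-tuple `α` of elements of a (torsion-free) abelian group:
for any choice of `r` of the indices, every product of the `α`'s over `s` of the chosen
indices equals the product over a different `s`-element subset of the chosen indices. -/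
def HasPropP {G : Type*} [CommGroup G] {q : ℕ} (α : Fin q → G) (r s : ℕ) : Prop :=
  ∀ T : Finset (Fin q), T.card = r →
    ∀ I ⊆ T, I.card = s →
      ∃ J ⊆ T, J.card = s ∧ J ≠ I ∧ ∏ i ∈ I, α i = ∏ j ∈ J, α j

theorem stmt0 {G : Type*} [CommGroup G] (hG : ∀ g : G, g ≠ 1 → ¬IsOfFinOrder g)
    {q r s : ℕ} (hs : 1 ≤ s) (hsr : s < r) (hrq : r ≤ q)
    (α : Fin q → G) (hα : HasPropP α r s) :
    ∃ S : Finset (Fin q), S.card = q - r + 2 ∧ ∀ i ∈ S, ∀ j ∈ S, α i = α j := by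
  classical
  set β : Fin q → Additive G := fun i => Additive.ofMul (α i) with hβ
  haveI htf : IsAddTorsionFree (Additive G) := by
    rw [isAddTorsionFree_iff_not_isOfFinAddOrder]
    intro g hg hfin
    refine hG g.toMul ?_ (isOfFinAddOrder_ofMul_iff.mp hfin)
    simpa using hg
  set H : Submodule ℤ (Additive G) := Submodule.span ℤ (Set.range β) with hH
  haveI : Module.Finite ℤ H := Module.Finite.span_of_finite ℤ (Set.finite_range β)
  haveI : Module.Free ℤ H := Module.free_of_finite_type_torsion_free'
  obtain ⟨n, b⟩ := Module.basisOfFiniteTypeTorsionFree' (R := ℤ) (M := H)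
  set β' : Fin q → H := fun i => ⟨β i, Submodule.subset_span ⟨i, rfl⟩⟩ with hβ'
  set F : H → Lex (Fin n →₀ ℤ) := fun x => toLex (b.repr x) with hF
  have Fadd : ∀ x y : H, F (x + y) = F x + F y := by
    intro x y
    show toLex (b.repr (x + y)) = _
    rw [map_add]
    rfl
  set F' : H →+ Lex (Fin n →₀ ℤ) := AddMonoidHom.mk' F Fadd with hF'
  have Finj : Function.Injective F := fun x y h => b.repr.injective (toLex_inj.mp h)
  set γ : Fin q → Lex (Fin n →₀ ℤ) := fun i => F (β' i) with hγdef
  have hsumF : ∀ (S : Finset (Fin q)), ∑ i ∈ S, γ i = F (∑ i ∈ S, β' i) := by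
    intro S
    show ∑ i ∈ S, F' (β' i) = F' (∑ i ∈ S, β' i)
    exact (map_sum F' β' S).symm
  have hγP : ∀ T : Finset (Fin q), T.card = r → ∀ I ⊆ T, I.card = s →
      ∃ J ⊆ T, J.card = s ∧ J ≠ I ∧ ∑ i ∈ I, γ i = ∑ j ∈ J, γ j := by
    intro T hT I hIT hIc
    obtain ⟨J, hJT, hJc, hJne, hprod⟩ := hα T hT I hIT hIc
    refine ⟨J, hJT, hJc, hJne, ?_⟩
    rw [hsumF I, hsumF J]
    congr 1
    apply Subtype.ext
    rw [AddSubmonoidClass.coe_finset_sum, AddSubmonoidClass.coe_finset_sum]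
    show ∑ i ∈ I, Additive.ofMul (α i) = ∑ j ∈ J, Additive.ofMul (α j)
    rw [← ofMul_prod, ← ofMul_prod, hprod]
  obtain ⟨S, hScard, hconst⟩ := key_lemma hs hsr hrq γ hγP
  refine ⟨S, hScard, fun i hi j hj => ?_⟩
  have h1 : β' i = β' j := Finj (hconst i hi j hj)
  have h2 : Additive.ofMul (α i) = Additive.ofMul (α j) := congrArg Subtype.val h1
  exact Additive.ofMul.injective h2
end

section
/- Let G be a torsion-free abelian group and let (α₁,…,α_q) be a q-tuple of elements of G having property (P_{r,s}) with q ≥ r > s ≥ 1, r ≤ 2s, and q ≥ 2s−1. Then there exist l := q−2(r−s)+2 distinct indices i₁,…,i_l ∈ {1,…,q} such that α_{i₁} = α_{i₂} = … = α_{i_l}. -/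
open Finset

/-- If two finsets have equal cardinality and equal products, then some element of the
second is `≤` some element of the first. -/
private lemma exch {L : Type*} [CommGroup L] [LinearOrder L] [IsOrderedMonoid L] {q : ℕ} {γ : Fin q → L}
    {A B : Finset (Fin q)} (hA : A.Nonempty) (hc : A.card = B.card)
    (hsum : ∏ a ∈ A, γ a = ∏ b ∈ B, γ b) :
    ∃ a ∈ A, ∃ b ∈ B, γ b ≤ γ a := by
  by_contra h
  push_neg at h
  haveI := hA.to_subtype
  have hcard : Fintype.card A = Fintype.card B := by
    simpa [Fintype.card_coe] using hc
  let e := Fintype.equivOfCardEq hcard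
  have hlt : ∏ x : A, γ x.1 < ∏ x : A, γ (e x).1 :=
    Finset.prod_lt_prod_of_nonempty' Finset.univ_nonempty
      (fun x _ => h x.1 x.2 (e x).1 (e x).2)
  have h2 : ∏ x : A, γ (e x).1 = ∏ y : B, γ y.1 :=
    Equiv.prod_comp e (fun y : B => γ y.1)
  rw [h2, Finset.prod_coe_sort, Finset.prod_coe_sort] at hlt
  exact absurd hsum (ne_of_lt hlt)

private lemma hasPropP_comp {G : Type*} [CommGroup G] {q r s : ℕ} {α : Fin q → G}
    (h : HasPropP α r s) (σ : Equiv.Perm (Fin q)) : HasPropP (α ∘ σ) r s := by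
  intro T hT I hIT hI
  obtain ⟨J, hJT, hJc, hJne, hJp⟩ := h (T.image σ)
    (by rw [Finset.card_image_of_injective _ σ.injective, hT])
    (I.image σ) (Finset.image_subset_image hIT)
    (by rw [Finset.card_image_of_injective _ σ.injective, hI])
  refine ⟨J.image σ.symm, ?_, ?_, ?_, ?_⟩
  · intro x hx
    obtain ⟨y, hy, rfl⟩ := Finset.mem_image.1 hx
    obtain ⟨z, hz, rfl⟩ := Finset.mem_image.1 (hJT hy)
    simpa using hz
  · rw [Finset.card_image_of_injective _ σ.symm.injective, hJc]
  · intro hEq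
    apply hJne
    have h2 : (J.image σ.symm).image σ = I.image σ := by rw [hEq]
    rwa [Finset.image_image,
      show (⇑σ ∘ ⇑σ.symm) = id from funext σ.apply_symm_apply, Finset.image_id] at h2
  · have e1 : ∏ i ∈ I, (α ∘ σ) i = ∏ i ∈ I.image σ, α i :=
      (Finset.prod_image (fun x _ y _ hxy => σ.injective hxy)).symm
    have e2 : ∏ j ∈ J.image σ.symm, (α ∘ σ) j = ∏ j ∈ J, α j := by
      rw [Finset.prod_image (fun x _ y _ hxy => σ.symm.injective hxy)]
      simp
    rw [e1, e2, hJp]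

private lemma key {L : Type*} [CommGroup L] [LinearOrder L] [IsOrderedMonoid L] {q r s : ℕ}
    (hs : 1 ≤ s) (hsr : s < r) (hrq : r ≤ q) (hr2s : r ≤ 2 * s) (hq2s : 2 * s - 1 ≤ q)
    (β : Fin q → L) (hβ : HasPropP β r s) :
    ∃ S : Finset (Fin q), S.card = q + 2 - 2 * (r - s) ∧ ∀ i ∈ S, ∀ j ∈ S, β i = β j := by
  set k := r - s with hk
  have hk1 : 1 ≤ k := by omega
  have hks : k ≤ s := by omega
  have h2kq : 2 * k ≤ q := by omega
  have hskq : s + k ≤ q := by omega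
  have hsq : s < q := by omega
  have hkq : k < q := by omega
  set σ := Tuple.sort β with hσ
  set γ : Fin q → L := β ∘ σ with hγ
  have hmono : Monotone γ := Tuple.monotone_sort β
  have hγP : HasPropP γ r s := hasPropP_comp hβ σ
  -- Case 1: bottom s, top k
  obtain ⟨a₁, ha₁, b₁, hb₁, hba₁⟩ :
      ∃ a : Fin q, a.1 < s ∧ ∃ b : Fin q, q - k ≤ b.1 ∧ γ b ≤ γ a := by
    set Bt : Finset (Fin q) := Finset.Iio ⟨s, hsq⟩ with hBt
    set Tp : Finset (Fin q) := Finset.Ici ⟨q - k, by omega⟩ with hTp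
    have hmemBt : ∀ i : Fin q, i ∈ Bt ↔ i.1 < s := by
      intro i; simp [hBt, Finset.mem_Iio, Fin.lt_def]
    have hmemTp : ∀ i : Fin q, i ∈ Tp ↔ q - k ≤ i.1 := by
      intro i; simp [hTp, Finset.mem_Ici, Fin.le_def]
    have hBtc : Bt.card = s := by rw [hBt, Fin.card_Iio]
    have hTpc : Tp.card = k := by rw [hTp, Fin.card_Ici]; show q - (q - k) = k; omega
    have hdisj : Disjoint Bt Tp := by
      rw [Finset.disjoint_left]
      intro i hi hi'
      rw [hmemBt] at hi; rw [hmemTp] at hi'; omega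
    obtain ⟨J, hJT, hJc, hJne, hJp⟩ := hγP (Bt ∪ Tp)
      (by rw [Finset.card_union_of_disjoint hdisj, hBtc, hTpc]; omega)
      Bt Finset.subset_union_left hBtc
    set A := Bt \ J with hA
    set B := J \ Bt with hB
    have hBsub : B ⊆ Tp := by
      intro x hx
      obtain ⟨hx1, hx2⟩ := Finset.mem_sdiff.1 hx
      rcases Finset.mem_union.1 (hJT hx1) with h | h
      · exact absurd h hx2
      · exact h
    have hcAB : A.card = B.card := Finset.card_sdiff_comm (by rw [hBtc, hJc])
    have hAne : A.Nonempty := by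
      rw [hA, Finset.sdiff_nonempty]
      intro hsub
      exact hJne (Finset.eq_of_subset_of_card_le hsub (by rw [hBtc, hJc])).symm
    have hprodAB : ∏ x ∈ A, γ x = ∏ x ∈ B, γ x := by
      have h1 := Finset.prod_sdiff (f := γ) (Finset.inter_subset_left (s₁ := Bt) (s₂ := J))
      have h2 := Finset.prod_sdiff (f := γ) (Finset.inter_subset_left (s₁ := J) (s₂ := Bt))
      rw [Finset.sdiff_inter_self_left] at h1 h2
      rw [Finset.inter_comm J Bt] at h2
      have := h1.trans (hJp.trans h2.symm)
      exact mul_right_cancel this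
    obtain ⟨a, ha, b, hb, hba⟩ := exch hAne hcAB hprodAB
    refine ⟨a, ?_, b, ?_, hba⟩
    · exact (hmemBt a).1 (Finset.mem_sdiff.1 ha).1
    · exact (hmemTp b).1 (hBsub hb)
  -- Case 2: bottom k, top s
  obtain ⟨b₂, hb₂, a₂, ha₂, hab₂⟩ :
      ∃ b : Fin q, b.1 < k ∧ ∃ a : Fin q, q - s ≤ a.1 ∧ γ a ≤ γ b := by
    set Bt : Finset (Fin q) := Finset.Iio ⟨k, hkq⟩ with hBt
    set Tp : Finset (Fin q) := Finset.Ici ⟨q - s, by omega⟩ with hTp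
    have hmemBt : ∀ i : Fin q, i ∈ Bt ↔ i.1 < k := by
      intro i; simp [hBt, Finset.mem_Iio, Fin.lt_def]
    have hmemTp : ∀ i : Fin q, i ∈ Tp ↔ q - s ≤ i.1 := by
      intro i; simp [hTp, Finset.mem_Ici, Fin.le_def]
    have hBtc : Bt.card = k := by rw [hBt, Fin.card_Iio]
    have hTpc : Tp.card = s := by rw [hTp, Fin.card_Ici]; show q - (q - s) = s; omega
    have hdisj : Disjoint Bt Tp := by
      rw [Finset.disjoint_left]
      intro i hi hi'
      rw [hmemBt] at hi; rw [hmemTp] at hi'; omega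
    obtain ⟨J, hJT, hJc, hJne, hJp⟩ := hγP (Bt ∪ Tp)
      (by rw [Finset.card_union_of_disjoint hdisj, hBtc, hTpc]; omega)
      Tp Finset.subset_union_right hTpc
    set A := Tp \ J with hA
    set B := J \ Tp with hB
    have hBsub : B ⊆ Bt := by
      intro x hx
      obtain ⟨hx1, hx2⟩ := Finset.mem_sdiff.1 hx
      rcases Finset.mem_union.1 (hJT hx1) with h | h
      · exact h
      · exact absurd h hx2
    have hcAB : A.card = B.card := Finset.card_sdiff_comm (by rw [hTpc, hJc])
    have hAne : A.Nonempty := by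
      rw [hA, Finset.sdiff_nonempty]
      intro hsub
      exact hJne (Finset.eq_of_subset_of_card_le hsub (by rw [hTpc, hJc])).symm
    have hBne : B.Nonempty := by
      rw [← Finset.card_pos, ← hcAB, Finset.card_pos]; exact hAne
    have hprodAB : ∏ x ∈ B, γ x = ∏ x ∈ A, γ x := by
      have h1 := Finset.prod_sdiff (f := γ) (Finset.inter_subset_left (s₁ := Tp) (s₂ := J))
      have h2 := Finset.prod_sdiff (f := γ) (Finset.inter_subset_left (s₁ := J) (s₂ := Tp))
      rw [Finset.sdiff_inter_self_left] at h1 h2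
      rw [Finset.inter_comm J Tp] at h2
      have := h2.trans (hJp.symm.trans h1.symm)
      exact mul_right_cancel this
    obtain ⟨b, hb, a, ha, hab⟩ := exch hBne (hcAB.symm) hprodAB
    refine ⟨b, ?_, a, ?_, hab⟩
    · exact (hmemBt b).1 (hBsub hb)
    · exact (hmemTp a).1 (Finset.mem_sdiff.1 ha).1
  -- the middle witness
  have hwlt : s - 1 < q := by omega
  set w : Fin q := ⟨s - 1, hwlt⟩ with hw
  -- from Case 1: γ is constant on positions in [s-1, q-k]
  have F1 : ∀ p : Fin q, s - 1 ≤ p.1 → p.1 ≤ q - k → γ p = γ a₁ := by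
    intro p h1 h2
    have hap : a₁ ≤ p := by rw [Fin.le_def]; omega
    have hpb : p ≤ b₁ := by rw [Fin.le_def]; omega
    exact le_antisymm ((hmono hpb).trans hba₁) (hmono hap)
  -- from Case 2: γ is constant on positions in [k-1, q-s]
  have F2 : ∀ p : Fin q, k - 1 ≤ p.1 → p.1 ≤ q - s → γ p = γ b₂ := by
    intro p h1 h2
    have hbp : b₂ ≤ p := by rw [Fin.le_def]; omega
    have hpa : p ≤ a₂ := by rw [Fin.le_def]; omega
    exact le_antisymm ((hmono hpa).trans hab₂) (hmono hbp)
  have hw1 : γ w = γ a₁ := F1 w (Nat.le_refl _) (by show s - 1 ≤ q - k; omega)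
  have hw2 : γ w = γ b₂ := F2 w (by show k - 1 ≤ s - 1; omega) (by show s - 1 ≤ q - s; omega)
  have F : ∀ p : Fin q, k - 1 ≤ p.1 → p.1 ≤ q - k → γ p = γ w := by
    intro p h1 h2
    rcases le_or_gt p.1 (q - s) with h | h
    · rw [F2 p h1 h, ← hw2]
    · have h3 : s - 1 ≤ p.1 := by omega
      rw [F1 p h3 h2, ← hw1]
  set S₀ : Finset (Fin q) := Finset.Icc ⟨k - 1, by omega⟩ ⟨q - k, by omega⟩ with hS₀
  have hS₀card : S₀.card = q + 2 - 2 * (r - s) := by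
    rw [hS₀, Fin.card_Icc]; show q - k + 1 - (k - 1) = q + 2 - 2 * (r - s); omega
  have hS₀mem : ∀ p : Fin q, p ∈ S₀ → γ p = γ w := by
    intro p hp
    rw [hS₀, Finset.mem_Icc, Fin.le_def, Fin.le_def] at hp
    exact F p hp.1 hp.2
  refine ⟨S₀.image σ, ?_, ?_⟩
  · rw [Finset.card_image_of_injective _ σ.injective, hS₀card]
  · intro i hi j hj
    obtain ⟨p, hp, rfl⟩ := Finset.mem_image.1 hi
    obtain ⟨p', hp', rfl⟩ := Finset.mem_image.1 hj
    have e1 : β (σ p) = γ p := rfl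
    have e2 : β (σ p') = γ p' := rfl
    rw [e1, e2, hS₀mem p hp, hS₀mem p' hp']

theorem stmt1 {G : Type*} [CommGroup G] (hG : ∀ g : G, g ≠ 1 → ¬IsOfFinOrder g)
    {q r s : ℕ} (hs : 1 ≤ s) (hsr : s < r) (hrq : r ≤ q)
    (hr2s : r ≤ 2 * s) (hq2s : 2 * s - 1 ≤ q)
    (α : Fin q → G) (hα : HasPropP α r s) :
    ∃ S : Finset (Fin q), S.card = q + 2 - 2 * (r - s) ∧ ∀ i ∈ S, ∀ j ∈ S, α i = α j := by
  classical
  haveI : IsAddTorsionFree (Additive G) := by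
    rw [isAddTorsionFree_iff_not_isOfFinAddOrder]
    intro a ha hfa
    refine hG a.toMul ?_ ?_
    · intro h1
      exact ha (by simpa using congrArg Additive.ofMul h1)
    · rw [← isOfFinAddOrder_ofMul_iff]
      simpa using hfa
  set v : Fin q → Additive G := fun i => Additive.ofMul (α i) with hv
  set M := Submodule.span ℤ (Set.range v) with hM
  haveI : Module.Finite ℤ M := Module.Finite.span_of_finite ℤ (Set.finite_range v)
  set ι := Module.Free.ChooseBasisIndex ℤ M with hι
  letI : LinearOrder ι := LinearOrder.lift' (Fintype.equivFin ι) (Fintype.equivFin ι).injective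
  set b := Module.Free.chooseBasis ℤ M with hb
  set m : Fin q → M := fun i => ⟨v i, Submodule.subset_span (Set.mem_range_self i)⟩ with hm
  set φ : M →+ Lex (ι →₀ ℤ) :=
    { toFun := fun x => toLex (b.repr x)
      map_zero' := by simp
      map_add' := fun x y => by
        show toLex (b.repr (x + y)) = toLex (b.repr x) + toLex (b.repr y)
        rw [map_add, toLex_add] } with hφ
  set β : Fin q → Multiplicative (Lex (ι →₀ ℤ)) :=
    fun i => Multiplicative.ofAdd (φ (m i)) with hβdef
  have hprodβ : ∀ K : Finset (Fin q),
      ∏ i ∈ K, β i = Multiplicative.ofAdd (φ (∑ i ∈ K, m i)) := by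
    intro K
    rw [map_sum, ofAdd_sum]
  have hcoe : ∀ K : Finset (Fin q),
      ((∑ i ∈ K, m i : M) : Additive G) = Additive.ofMul (∏ i ∈ K, α i) := by
    intro K
    rw [AddSubmonoidClass.coe_finset_sum, ofMul_prod]
  have hβ : HasPropP β r s := by
    intro T hT I hIT hI
    obtain ⟨J, hJT, hJc, hJne, hJp⟩ := hα T hT I hIT hI
    refine ⟨J, hJT, hJc, hJne, ?_⟩
    rw [hprodβ, hprodβ]
    have : (∑ i ∈ I, m i) = ∑ j ∈ J, m j := by
      apply Subtype.ext
      rw [hcoe, hcoe, hJp]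
    rw [this]
  obtain ⟨S, hScard, hSeq⟩ := key hs hsr hrq hr2s hq2s β hβ
  refine ⟨S, hScard, fun i hi j hj => ?_⟩
  have h1 : β i = β j := hSeq i hi j hj
  have h2 : φ (m i) = φ (m j) := Multiplicative.ofAdd.injective h1
  have h3 : b.repr (m i) = b.repr (m j) := toLex.injective h2
  have h4 : m i = m j := b.repr.injective h3
  have h5 : v i = v j := congrArg Subtype.val h4
  exact Additive.ofMul.injective h5
end

section
/- Let G be a torsion-free abelian group and let (α₁,…,α_q) be a q-tuple of elements of G having property (P_{r,s}) with q ≥ r > s ≥ 1, r ≤ 2s, and q < 2s−1. Then there exist 2(q−r+2) distinct indices i₁,…,i_{q−r+2}, j₁,…,j_{q−r+2} in {1,…,q} such that α_{i₁} = … = α_{i_{q−r+2}} and α_{j₁} = … = α_{j_{q−r+2}}. -/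
open Finset

lemma sum_lt_sum_pairs {M : Type*} [AddCommGroup M] [LinearOrder M] [IsOrderedAddMonoid M] {ι : Type*}
    (b : ι → M) {A B : Finset ι} (hA : A.Nonempty) (hcard : A.card = B.card)
    (h : ∀ x ∈ A, ∀ y ∈ B, b x < b y) :
    ∑ x ∈ A, b x < ∑ y ∈ B, b y := by
  have hB : B.Nonempty := by
    rw [← Finset.card_pos, ← hcard, Finset.card_pos]; exact hA
  obtain ⟨y₀, hy₀, hmin⟩ := B.exists_min_image b hB
  calc ∑ x ∈ A, b x < ∑ _x ∈ A, b y₀ :=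
        Finset.sum_lt_sum_of_nonempty hA (fun x hx => h x hx y₀ hy₀)
    _ = A.card • b y₀ := by rw [Finset.sum_const]
    _ = B.card • b y₀ := by rw [hcard]
    _ = ∑ _y ∈ B, b y₀ := by rw [Finset.sum_const]
    _ ≤ ∑ y ∈ B, b y := Finset.sum_le_sum (fun y hy => hmin y hy)

lemma sdiff_sum_eq {M : Type*} [AddCommGroup M] {ι : Type*} [DecidableEq ι]
    (b : ι → M) {I J : Finset ι} (h : ∑ i ∈ I, b i = ∑ j ∈ J, b j) :
    ∑ i ∈ I \ J, b i = ∑ j ∈ J \ I, b j := by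
  have h1 := Finset.sum_sdiff (f := b) (Finset.inter_subset_left : I ∩ J ⊆ I)
  rw [Finset.sdiff_inter_self_left] at h1
  have h2 := Finset.sum_sdiff (f := b) (Finset.inter_subset_left : J ∩ I ⊆ J)
  rw [Finset.sdiff_inter_self_left] at h2
  rw [Finset.inter_comm] at h2
  have := h1.trans (h.trans h2.symm)
  exact add_right_cancel this

lemma sdiff_nonempty_of_ne {ι : Type*} [DecidableEq ι] {I J : Finset ι}
    (hcard : I.card = J.card) (hne : I ≠ J) : (I \ J).Nonempty := by
  rw [Finset.sdiff_nonempty]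
  intro hsub
  exact hne (Finset.eq_of_subset_of_card_le hsub (le_of_eq hcard.symm))

lemma card_sdiff_eq {ι : Type*} [DecidableEq ι] {I J : Finset ι}
    (hcard : I.card = J.card) : (I \ J).card = (J \ I).card := by
  have h1 := Finset.card_sdiff_add_card_inter I J
  have h2 := Finset.card_sdiff_add_card_inter J I
  rw [Finset.inter_comm] at h2
  omega

lemma main_lemma {M : Type*} [AddCommGroup M] [LinearOrder M] [IsOrderedAddMonoid M] {q r s : ℕ}
    (hs : 1 ≤ s) (hsr : s < r) (hrq : r ≤ q) (hr2s : r ≤ 2 * s) (hq2s : q < 2 * s - 1)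
    (b : Fin q → M)
    (hb : ∀ T : Finset (Fin q), T.card = r → ∀ I ⊆ T, I.card = s →
      ∃ J ⊆ T, J.card = s ∧ J ≠ I ∧ ∑ i ∈ I, b i = ∑ j ∈ J, b j) :
    ∃ S T : Finset (Fin q), Disjoint S T ∧ S.card = q - r + 2 ∧ T.card = q - r + 2 ∧
      (∀ i ∈ S, ∀ j ∈ S, b i = b j) ∧ (∀ i ∈ T, ∀ j ∈ T, b i = b j) := by
  classical
  have hq2 : q ≤ 2 * s - 2 := by omega
  set σ := Tuple.sort b with hσ
  have hmono : Monotone (b ∘ σ) := Tuple.monotone_sort b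
  have hmono' : ∀ (p p' : ℕ) (hp : p < q) (hp' : p' < q), p ≤ p' →
      b (σ ⟨p, hp⟩) ≤ b (σ ⟨p', hp'⟩) := by
    intro p p' hp hp' hle
    exact hmono (show (⟨p, hp⟩ : Fin q) ≤ ⟨p', hp'⟩ from hle)
  -- first key equality: gap at position s within any window
  have key1 : ∀ u, u + r ≤ q → ∀ (h1 : u + s - 1 < q) (h2 : u + s < q),
      b (σ ⟨u + s - 1, h1⟩) = b (σ ⟨u + s, h2⟩) := by
    intro u hu h1 h2
    by_contra hne
    have hlt : b (σ ⟨u + s - 1, h1⟩) < b (σ ⟨u + s, h2⟩) :=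
      lt_of_le_of_ne (hmono' _ _ _ _ (by omega)) hne
    set f : Fin r → Fin q := fun i => σ ⟨u + i.1, by omega⟩ with hf
    have hfinj : Function.Injective f := by
      intro i j hij
      have := σ.injective hij
      simp only [Fin.mk.injEq] at this
      exact Fin.ext (by omega)
    set T : Finset (Fin q) := Finset.image f Finset.univ with hT
    have hTcard : T.card = r := by
      rw [hT, Finset.card_image_of_injective _ hfinj, Finset.card_univ, Fintype.card_fin]
    set g : Fin s → Fin q := fun i => σ ⟨u + i.1, by omega⟩ with hg
    have hginj : Function.Injective g := by
      intro i j hij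
      have := σ.injective hij
      simp only [Fin.mk.injEq] at this
      exact Fin.ext (by omega)
    set I : Finset (Fin q) := Finset.image g Finset.univ with hI
    have hIcard : I.card = s := by
      rw [hI, Finset.card_image_of_injective _ hginj, Finset.card_univ, Fintype.card_fin]
    have hIT : I ⊆ T := by
      intro x hx
      rw [hI, Finset.mem_image] at hx
      obtain ⟨i, _, rfl⟩ := hx
      rw [hT, Finset.mem_image]
      exact ⟨⟨i.1, by omega⟩, Finset.mem_univ _, rfl⟩
    obtain ⟨J, hJT, hJcard, hJne, hsum⟩ := hb T hTcard I hIT hIcard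
    -- elements of I are small
    have hsmall : ∀ x ∈ I, b x ≤ b (σ ⟨u + s - 1, h1⟩) := by
      intro x hx
      rw [hI, Finset.mem_image] at hx
      obtain ⟨i, _, rfl⟩ := hx
      exact hmono' _ _ _ _ (by have := i.2; omega)
    -- elements of T \ I are large
    have hbig : ∀ y ∈ T, y ∉ I → b (σ ⟨u + s, h2⟩) ≤ b y := by
      intro y hy hyI
      rw [hT, Finset.mem_image] at hy
      obtain ⟨i, _, rfl⟩ := hy
      have his : s ≤ i.1 := by
        by_contra hcon
        apply hyI
        rw [hI, Finset.mem_image]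
        exact ⟨⟨i.1, by omega⟩, Finset.mem_univ _, rfl⟩
      exact hmono' _ _ _ _ (by omega)
    have hA : (I \ J).Nonempty := sdiff_nonempty_of_ne (by omega) (Ne.symm hJne)
    have hlt2 : ∑ x ∈ I \ J, b x < ∑ y ∈ J \ I, b y := by
      apply sum_lt_sum_pairs b hA (card_sdiff_eq (by omega))
      intro x hx y hy
      have hxI := (Finset.mem_sdiff.mp hx).1
      have hyJ := Finset.mem_sdiff.mp hy
      calc b x ≤ b (σ ⟨u + s - 1, h1⟩) := hsmall x hxI
        _ < b (σ ⟨u + s, h2⟩) := hlt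
        _ ≤ b y := hbig y (hJT hyJ.1) hyJ.2
    exact absurd (sdiff_sum_eq b hsum) (ne_of_lt hlt2)
  -- second key equality: gap at position r - s within any window
  have key2 : ∀ u, u + r ≤ q → ∀ (h1 : u + (r - s) - 1 < q) (h2 : u + (r - s) < q),
      b (σ ⟨u + (r - s) - 1, h1⟩) = b (σ ⟨u + (r - s), h2⟩) := by
    intro u hu h1 h2
    by_contra hne
    have hlt : b (σ ⟨u + (r - s) - 1, h1⟩) < b (σ ⟨u + (r - s), h2⟩) :=
      lt_of_le_of_ne (hmono' _ _ _ _ (by omega)) hne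
    set f : Fin r → Fin q := fun i => σ ⟨u + i.1, by omega⟩ with hf
    have hfinj : Function.Injective f := by
      intro i j hij
      have := σ.injective hij
      simp only [Fin.mk.injEq] at this
      exact Fin.ext (by omega)
    set T : Finset (Fin q) := Finset.image f Finset.univ with hT
    have hTcard : T.card = r := by
      rw [hT, Finset.card_image_of_injective _ hfinj, Finset.card_univ, Fintype.card_fin]
    set g : Fin s → Fin q := fun i => σ ⟨u + (r - s) + i.1, by omega⟩ with hg
    have hginj : Function.Injective g := by
      intro i j hij
      have := σ.injective hij
      simp only [Fin.mk.injEq] at this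
      exact Fin.ext (by omega)
    set I : Finset (Fin q) := Finset.image g Finset.univ with hI
    have hIcard : I.card = s := by
      rw [hI, Finset.card_image_of_injective _ hginj, Finset.card_univ, Fintype.card_fin]
    have hIT : I ⊆ T := by
      intro x hx
      rw [hI, Finset.mem_image] at hx
      obtain ⟨i, _, rfl⟩ := hx
      rw [hT, Finset.mem_image]
      refine ⟨⟨r - s + i.1, by omega⟩, Finset.mem_univ _, ?_⟩
      simp only [hf]
      congr 1
      exact Fin.ext (by simp; omega)
    obtain ⟨J, hJT, hJcard, hJne, hsum⟩ := hb T hTcard I hIT hIcard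
    -- elements of I are large
    have hbig : ∀ y ∈ I, b (σ ⟨u + (r - s), h2⟩) ≤ b y := by
      intro y hy
      rw [hI, Finset.mem_image] at hy
      obtain ⟨i, _, rfl⟩ := hy
      exact hmono' _ _ _ _ (by omega)
    -- elements of T \ I are small
    have hsmall : ∀ x ∈ T, x ∉ I → b x ≤ b (σ ⟨u + (r - s) - 1, h1⟩) := by
      intro x hx hxI
      rw [hT, Finset.mem_image] at hx
      obtain ⟨i, _, rfl⟩ := hx
      have his : i.1 < r - s := by
        by_contra hcon
        apply hxI
        rw [hI, Finset.mem_image]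
        refine ⟨⟨i.1 - (r - s), by have := i.2; omega⟩, Finset.mem_univ _, ?_⟩
        simp only [hg]
        congr 1
        exact Fin.ext (by simp; omega)
      exact hmono' _ _ _ _ (by omega)
    have hA : (J \ I).Nonempty := sdiff_nonempty_of_ne (by omega) hJne
    have hlt2 : ∑ x ∈ J \ I, b x < ∑ y ∈ I \ J, b y := by
      apply sum_lt_sum_pairs b hA (card_sdiff_eq (by omega))
      intro x hx y hy
      have hxJ := Finset.mem_sdiff.mp hx
      have hyI := (Finset.mem_sdiff.mp hy).1
      calc b x ≤ b (σ ⟨u + (r - s) - 1, h1⟩) := hsmall x (hJT hxJ.1) hxJ.2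
        _ < b (σ ⟨u + (r - s), h2⟩) := hlt
        _ ≤ b y := hbig y hyI
    exact absurd (sdiff_sum_eq b hsum.symm) (ne_of_lt hlt2)
  -- chains
  have chain1 : ∀ n, n ≤ q - r + 1 → ∀ (h0 : s - 1 < q) (hn : s - 1 + n < q),
      b (σ ⟨s - 1, h0⟩) = b (σ ⟨s - 1 + n, hn⟩) := by
    intro n
    induction n with
    | zero => intro _ h0 hn; congr 1
    | succ m ih =>
      intro hm h0 hn
      have hmq : s - 1 + m < q := by omega
      rw [ih (by omega) h0 hmq]
      have := key1 m (by omega) (by omega) (by omega)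
      have e1 : (⟨m + s - 1, by omega⟩ : Fin q) = ⟨s - 1 + m, hmq⟩ := by
        simp only [Fin.mk.injEq]; omega
      have e2 : (⟨m + s, by omega⟩ : Fin q) = ⟨s - 1 + (m + 1), hn⟩ := by
        simp only [Fin.mk.injEq]; omega
      rw [e1, e2] at this
      exact this
  have chain2 : ∀ n, n ≤ q - r + 1 → ∀ (h0 : r - s - 1 < q) (hn : r - s - 1 + n < q),
      b (σ ⟨r - s - 1, h0⟩) = b (σ ⟨r - s - 1 + n, hn⟩) := by
    intro n
    induction n with
    | zero => intro _ h0 hn; congr 1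
    | succ m ih =>
      intro hm h0 hn
      have hmq : r - s - 1 + m < q := by omega
      rw [ih (by omega) h0 hmq]
      have := key2 m (by omega) (by omega) (by omega)
      have e1 : (⟨m + (r - s) - 1, by omega⟩ : Fin q) = ⟨r - s - 1 + m, hmq⟩ := by
        simp only [Fin.mk.injEq]; omega
      have e2 : (⟨m + (r - s), by omega⟩ : Fin q) = ⟨r - s - 1 + (m + 1), hn⟩ := by
        simp only [Fin.mk.injEq]; omega
      rw [e1, e2] at this
      exact this
  -- the two blocks
  set fS : Fin (q - r + 2) → Fin q := fun i => σ ⟨r - s - 1 + i.1, by have := i.2; omega⟩ with hfS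
  set fT : Fin (q - r + 2) → Fin q := fun i => σ ⟨s - 1 + i.1, by have := i.2; omega⟩ with hfT
  have hfSinj : Function.Injective fS := by
    intro i j hij
    have := σ.injective hij
    simp only [Fin.mk.injEq] at this
    exact Fin.ext (by omega)
  have hfTinj : Function.Injective fT := by
    intro i j hij
    have := σ.injective hij
    simp only [Fin.mk.injEq] at this
    exact Fin.ext (by omega)
  refine ⟨Finset.image fS Finset.univ, Finset.image fT Finset.univ, ?_, ?_, ?_, ?_, ?_⟩
  · rw [Finset.disjoint_left]
    intro x hx hx'
    rw [Finset.mem_image] at hx hx'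
    obtain ⟨i, _, rfl⟩ := hx
    obtain ⟨j, _, hj⟩ := hx'
    have := σ.injective hj
    simp only [Fin.mk.injEq] at this
    have hi := i.2
    have hj2 := j.2
    omega
  · rw [Finset.card_image_of_injective _ hfSinj, Finset.card_univ, Fintype.card_fin]
  · rw [Finset.card_image_of_injective _ hfTinj, Finset.card_univ, Fintype.card_fin]
  · intro x hx y hy
    rw [Finset.mem_image] at hx hy
    obtain ⟨i, _, rfl⟩ := hx
    obtain ⟨j, _, rfl⟩ := hy
    have hi := chain2 i.1 (by have := i.2; omega) (by omega) (by have := i.2; omega)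
    have hj := chain2 j.1 (by have := j.2; omega) (by omega) (by have := j.2; omega)
    rw [hfS]
    rw [← hi, ← hj]
  · intro x hx y hy
    rw [Finset.mem_image] at hx hy
    obtain ⟨i, _, rfl⟩ := hx
    obtain ⟨j, _, rfl⟩ := hy
    have hi := chain1 i.1 (by have := i.2; omega) (by omega) (by have := i.2; omega)
    have hj := chain1 j.1 (by have := j.2; omega) (by omega) (by have := j.2; omega)
    rw [hfT]
    rw [← hi, ← hj]


/-- A monoid is torsion-free if no element other than `1` has finite order
(the definition `Monoid.IsTorsionFree` of the older Mathlib, since removed). -/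
def Monoid.IsTorsionFree (G : Type*) [Monoid G] : Prop :=
  ∀ g : G, g ≠ 1 → ¬IsOfFinOrder g

theorem stmt2 {G : Type*} [CommGroup G] (hG : Monoid.IsTorsionFree G)
    {q r s : ℕ} (hs : 1 ≤ s) (hsr : s < r) (hrq : r ≤ q)
    (hr2s : r ≤ 2 * s) (hq2s : q < 2 * s - 1)
    (α : Fin q → G) (hα : HasPropP α r s) :
    ∃ S T : Finset (Fin q), Disjoint S T ∧ S.card = q - r + 2 ∧ T.card = q - r + 2 ∧
      (∀ i ∈ S, ∀ j ∈ S, α i = α j) ∧ (∀ i ∈ T, ∀ j ∈ T, α i = α j) := by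
  classical
  haveI hG' : IsAddTorsionFree (Additive G) := IsAddTorsionFree.of_not_isOfFinAddOrder fun g hg hfin =>
    hG (Additive.toMul g) hg ((isOfFinAddOrder_ofMul_iff (x := Additive.toMul g)).mp hfin)
  haveI : NoZeroSMulDivisors ℤ (Additive G) :=
    IsAddTorsionFree.to_noZeroSMulDivisors_int
  set a : Fin q → Additive G := fun i => Additive.ofMul (α i) with ha
  set N : Submodule ℤ (Additive G) := Submodule.span ℤ (Set.range a) with hN
  haveI : Module.Finite ℤ N := Module.Finite.span_of_finite ℤ (Set.finite_range a)
  set n := Fintype.card (Module.Free.ChooseBasisIndex ℤ N) with hn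
  set e : Module.Free.ChooseBasisIndex ℤ N ≃ Fin n := Fintype.equivFin _ with he
  set B := (Module.Free.chooseBasis ℤ N).reindex e with hB
  set ψ : (Fin n →₀ ℤ) ≃+ Lex (Fin n →₀ ℤ) :=
    { toLex with map_add' := fun _ _ => rfl } with hψ
  set φ : N →+ Lex (Fin n →₀ ℤ) :=
    ψ.toAddMonoidHom.comp (B.repr.toLinearMap.toAddMonoidHom) with hφ
  have hφinj : Function.Injective φ := by
    intro x y hxy
    exact B.repr.injective (ψ.injective hxy)
  have hmem : ∀ i, a i ∈ N := fun i => Submodule.subset_span ⟨i, rfl⟩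
  set b : Fin q → Lex (Fin n →₀ ℤ) := fun i => φ ⟨a i, hmem i⟩ with hb
  have hsum : ∀ I : Finset (Fin q), ∑ i ∈ I, b i = φ ⟨Additive.ofMul (∏ i ∈ I, α i), by
      rw [ofMul_prod]; exact Submodule.sum_mem N (fun i _ => hmem i)⟩ := by
    intro I
    rw [hb]
    rw [← map_sum φ]
    congr 1
    apply Subtype.ext
    push_cast
    rw [ofMul_prod]
  have hbp : ∀ T : Finset (Fin q), T.card = r → ∀ I ⊆ T, I.card = s →
      ∃ J ⊆ T, J.card = s ∧ J ≠ I ∧ ∑ i ∈ I, b i = ∑ j ∈ J, b j := by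
    intro T hT I hIT hI
    obtain ⟨J, hJT, hJcard, hJne, heq⟩ := hα T hT I hIT hI
    refine ⟨J, hJT, hJcard, hJne, ?_⟩
    rw [hsum I, hsum J]
    congr 1
    exact Subtype.ext (congrArg Additive.ofMul heq)
  obtain ⟨S, T, hdisj, hScard, hTcard, hSconst, hTconst⟩ :=
    main_lemma hs hsr hrq hr2s hq2s b hbp
  refine ⟨S, T, hdisj, hScard, hTcard, ?_, ?_⟩
  · intro i hi j hj
    have := hφinj (hSconst i hi j hj)
    have := Subtype.ext_iff.mp this
    exact Additive.ofMul.injective this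
  · intro i hi j hj
    have := hφinj (hTconst i hi j hj)
    have := Subtype.ext_iff.mp this
    exact Additive.ofMul.injective this
end

section
/- A q-tuple (α₁,…,α_q) of elements of a torsion-free abelian group G has the property (P_{r,s}) if and only if it has the property (P_{r,r−s}), where q ≥ r > s ≥ 1 and r > r−s ≥ 1. -/
lemma hasPropP_compl {G : Type*} [CommGroup G] {q : ℕ} (α : Fin q → G) {r s' : ℕ}
    (h : s' ≤ r) (H : HasPropP α r s') : HasPropP α r (r - s') := by
  intro T hT I hIT hIcard
  have hcardI' : (T \ I).card = s' := by
    rw [Finset.card_sdiff_of_subset hIT, hT, hIcard, Nat.sub_sub_self h]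
  obtain ⟨J', hJ'T, hJ'card, hne, hprod⟩ := H T hT (T \ I) Finset.sdiff_subset hcardI'
  refine ⟨T \ J', Finset.sdiff_subset, ?_, ?_, ?_⟩
  · rw [Finset.card_sdiff_of_subset hJ'T, hT, hJ'card]
  · intro heq
    apply hne
    rw [← Finset.sdiff_sdiff_eq_self hJ'T, heq]
  · have h1 : (∏ i ∈ T \ I, α i) * ∏ i ∈ I, α i = ∏ i ∈ T, α i :=
      Finset.prod_sdiff hIT
    have h2 : (∏ i ∈ T \ J', α i) * ∏ i ∈ J', α i = ∏ i ∈ T, α i :=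
      Finset.prod_sdiff hJ'T
    rw [← hprod] at h2
    rw [← h1, mul_comm] at h2
    exact (mul_left_cancel h2).symm

theorem stmt3 {G : Type*} [CommGroup G] (hG : Monoid.IsTorsionFree G)
    {q r s : ℕ} (hs : 1 ≤ s) (hsr : s < r) (hrq : r ≤ q)
    (α : Fin q → G) :
    HasPropP α r s ↔ HasPropP α r (r - s) := by
  constructor
  · exact hasPropP_compl α hsr.le
  · intro H
    have := hasPropP_compl α (Nat.sub_le r s) H
    rwa [Nat.sub_sub_self hsr.le] at this
end

section
/- Let n ≥ 2 and let H₁,…,H_{n+3} be hyperplanes in ℙ^n(ℂ) in general position. Then there does not exist a projective linear transformation L of ℙ^n such that L(H_i) = H_i for 1 ≤ i ≤ n+1, L(H_{n+2}) = H_{n+3}, and L(H_{n+3}) = H_{n+2}. -/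
/-- A family of hyperplanes in `ℙ^n`, given by their coefficient vectors in `ℂ^{n+1}`,
is in general position if the coefficient vectors of any at most `n+1` of them are
linearly independent over `ℂ`. -/
def InGenPos {q n : ℕ} (H : Fin q → (Fin (n + 1) → ℂ)) : Prop :=
  ∀ S : Finset (Fin q), S.card ≤ n + 1 →
    LinearIndependent ℂ (fun i : {x // x ∈ S} => H i.1)

/-- The projective linear transformation of `ℙ^n` induced by the invertible matrix `M`
maps the hyperplane with coefficient vector `u` onto the hyperplane with coefficient
vector `v`:  `x ∈ ker u ↔ M x ∈ ker v`, i.e. `v ᵀM` is proportional to `u`. -/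
def MapsHyperplane {n : ℕ} (M : Matrix (Fin (n + 1)) (Fin (n + 1)) ℂ)
    (u v : Fin (n + 1) → ℂ) : Prop :=
  ∃ c : ℂ, c ≠ 0 ∧ Matrix.vecMul v M = c • u

lemma auxZero {q n : ℕ} {H : Fin q → (Fin (n + 1) → ℂ)} (hgen : InGenPos H)
    (S : Finset (Fin q)) (hS : S.card ≤ n + 1) (g : Fin q → ℂ)
    (hsum : ∑ i ∈ S, g i • H i = 0) : ∀ i ∈ S, g i = 0 := by
  have hind := hgen S hS
  rw [Fintype.linearIndependent_iff] at hind
  have h2 : ∑ i : {x // x ∈ S}, g i.1 • H i.1 = 0 := by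
    rw [← hsum, ← Finset.sum_attach S (fun i => g i • H i)]; rfl
  intro i hi
  exact hind (fun i => g i.1) h2 ⟨i, hi⟩

theorem stmt8 {n : ℕ} (hn : 2 ≤ n) (H : Fin (n + 3) → (Fin (n + 1) → ℂ))
    (hgen : InGenPos H) :
    ¬∃ M : Matrix (Fin (n + 1)) (Fin (n + 1)) ℂ, IsUnit M.det ∧
      (∀ i : Fin (n + 3), (i : ℕ) < n + 1 → MapsHyperplane M (H i) (H i)) ∧
      MapsHyperplane M (H ⟨n + 1, by omega⟩) (H ⟨n + 2, by omega⟩) ∧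
      MapsHyperplane M (H ⟨n + 2, by omega⟩) (H ⟨n + 1, by omega⟩) := by
  rintro ⟨M, -, h1, ⟨a, ha0, hA⟩, ⟨b, hb0, hB2⟩⟩
  -- embedding
  have embinj : Function.Injective (fun i : Fin (n + 1) => (⟨i.1, by omega⟩ : Fin (n + 3))) :=
    fun i j h => Fin.ext (by simpa [Fin.ext_iff] using h)
  let emb : Fin (n + 1) ↪ Fin (n + 3) := ⟨fun i => ⟨i.1, by omega⟩, embinj⟩
  let B : Fin (n + 1) → (Fin (n + 1) → ℂ) := fun i => H (emb i)
  -- B is linearly independent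
  have hBind : LinearIndependent ℂ B := by
    have hcard : (Finset.univ.map emb).card ≤ n + 1 := by simp
    have h := hgen (Finset.univ.map emb) hcard
    have heq : B = (fun i : {x // x ∈ Finset.univ.map emb} => H i.1) ∘
        (fun i : Fin (n + 1) =>
          (⟨emb i, Finset.mem_map_of_mem emb (Finset.mem_univ i)⟩ :
            {x // x ∈ Finset.univ.map emb})) := rfl
    rw [heq]
    exact h.comp _ (fun i j hij => emb.injective (congrArg Subtype.val hij))
  have hcard : Fintype.card (Fin (n + 1)) = Module.finrank ℂ (Fin (n + 1) → ℂ) := by simp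
  let bb : Module.Basis (Fin (n + 1)) ℂ (Fin (n + 1) → ℂ) :=
    basisOfLinearIndependentOfCardEqFinrank hBind hcard
  have hbb : ⇑bb = B := coe_basisOfLinearIndependentOfCardEqFinrank _ _
  have hspan : ∀ x : Fin (n + 1) → ℂ, ∃ g : Fin (n + 1) → ℂ, ∑ i, g i • B i = x := by
    intro x
    have hx : x ∈ Submodule.span ℂ (Set.range B) := by
      rw [← hbb, bb.span_eq]; trivial
    exact (Submodule.mem_span_range_iff_exists_fun ℂ).mp hx
  obtain ⟨s, hsum1⟩ := hspan (H ⟨n + 1, by omega⟩)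
  obtain ⟨t, hsum2⟩ := hspan (H ⟨n + 2, by omega⟩)
  -- eigenvalues
  choose c hc0 hc using fun i : Fin (n + 1) => h1 (emb i) i.isLt
  -- coefficient comparison
  have hkey : ∀ g h : Fin (n + 1) → ℂ, ∑ i, g i • B i = ∑ i, h i • B i → ∀ i, g i = h i := by
    intro g h hgh i
    have h0 : ∑ i, (g i - h i) • B i = 0 := by
      simp [sub_smul, Finset.sum_sub_distrib, hgh]
    have := Fintype.linearIndependent_iff.mp hBind (fun i => g i - h i) h0 i
    exact sub_eq_zero.mp this
  -- eigen-relations on coordinates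
  have hv1 : Matrix.vecMul (H ⟨n + 1, by omega⟩) M = ∑ i, (s i * c i) • B i := by
    rw [← hsum1, ← Matrix.vecMulLinear_apply, map_sum]
    refine Finset.sum_congr rfl fun i _ => ?_
    rw [map_smul, Matrix.vecMulLinear_apply]
    show s i • Matrix.vecMul (H (emb i)) M = _
    rw [hc i, smul_smul]
  have hv2 : Matrix.vecMul (H ⟨n + 2, by omega⟩) M = ∑ i, (t i * c i) • B i := by
    rw [← hsum2, ← Matrix.vecMulLinear_apply, map_sum]
    refine Finset.sum_congr rfl fun i _ => ?_
    rw [map_smul, Matrix.vecMulLinear_apply]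
    show t i • Matrix.vecMul (H (emb i)) M = _
    rw [hc i, smul_smul]
  have e1 : ∀ i, s i * c i = b * t i := by
    refine hkey _ _ ?_
    rw [← hv1, hB2, ← hsum2, Finset.smul_sum]
    exact Finset.sum_congr rfl fun i _ => smul_smul b (t i) (B i)
  have e2 : ∀ i, t i * c i = a * s i := by
    refine hkey _ _ ?_
    rw [← hv2, hA, ← hsum1, Finset.smul_sum]
    exact Finset.sum_congr rfl fun i _ => smul_smul a (s i) (B i)
  -- s i ≠ 0
  have hsne : ∀ i, s i ≠ 0 := by
    intro i0 hi0
    set S : Finset (Fin (n + 3)) :=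
      (Finset.univ.erase i0).map emb ∪ {⟨n + 1, by omega⟩} with hS
    set g : Fin (n + 3) → ℂ :=
      fun j => if h : (j : ℕ) < n + 1 then -(s ⟨j.1, h⟩) else 1 with hg
    have hScard : S.card ≤ n + 1 := by
      refine (Finset.card_union_le _ _).trans ?_
      simp [Finset.card_erase_of_mem]
    have hdisj : Disjoint ((Finset.univ.erase i0).map emb)
        ({⟨n + 1, by omega⟩} : Finset (Fin (n + 3))) := by
      rw [Finset.disjoint_left]
      rintro x hx hx'
      obtain ⟨y, -, rfl⟩ := Finset.mem_map.mp hx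
      have := Finset.mem_singleton.mp hx'
      have : (emb y : ℕ) = n + 1 := congrArg Fin.val this
      have hy := y.isLt
      have hyv : (y : ℕ) = n + 1 := this
      omega
    have hgsum : ∑ j ∈ S, g j • H j = 0 := by
      rw [hS, Finset.sum_union hdisj, Finset.sum_map, Finset.sum_singleton]
      have h1' : ∀ y : Fin (n + 1), g (emb y) • H (emb y) = -(s y) • B y := by
        intro y
        have : g (emb y) = -(s y) := by
          simp only [hg]
          rw [dif_pos]
          · exact rfl
        rw [this]
      have h2' : g ⟨n + 1, by omega⟩ = 1 := by
        simp only [hg]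
        rw [dif_neg]
        simp
      rw [h2']
      have : ∑ y ∈ Finset.univ.erase i0, g (emb y) • H (emb y)
          = ∑ y ∈ Finset.univ.erase i0, -(s y) • B y := by
        exact Finset.sum_congr rfl fun y _ => h1' y
      rw [this]
      have herase : ∑ y ∈ Finset.univ.erase i0, -(s y) • B y
          = ∑ y, -(s y) • B y - -(s i0) • B i0 :=
        Finset.sum_erase_eq_sub (Finset.mem_univ i0)
      rw [herase, hi0]
      simp only [neg_zero, zero_smul, sub_zero, neg_smul, Finset.sum_neg_distrib]
      rw [hsum1]
      simp
    have := auxZero hgen S hScard g hgsum ⟨n + 1, by omega⟩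
      (Finset.mem_union_right _ (Finset.mem_singleton_self _))
    have h2' : g ⟨n + 1, by omega⟩ = 1 := by
      simp only [hg]; rw [dif_neg]; simp
    rw [h2'] at this
    exact one_ne_zero this
  -- c i squared constant
  have e3 : ∀ i, c i * c i = a * b := by
    intro i
    have key : s i * (c i * c i) = s i * (a * b) := by
      calc s i * (c i * c i) = (s i * c i) * c i := by ring
        _ = (b * t i) * c i := by rw [e1]
        _ = b * (t i * c i) := by ring
        _ = b * (a * s i) := by rw [e2]
        _ = s i * (a * b) := by ring
    exact mul_left_cancel₀ (hsne i) key
  -- dichotomy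
  have i0lt : 0 < n + 1 := by omega
  have hdich : ∀ i, c i = c ⟨0, i0lt⟩ ∨ c i = -(c ⟨0, i0lt⟩) := by
    intro i
    have : (c i - c ⟨0, i0lt⟩) * (c i + c ⟨0, i0lt⟩) = 0 := by
      have hthis := e3 i
      have h0 := e3 ⟨0, i0lt⟩
      linear_combination hthis - h0
    rcases mul_eq_zero.mp this with h | h
    · exact Or.inl (sub_eq_zero.mp h)
    · exact Or.inr (eq_neg_of_add_eq_zero_left h)
  -- choose majority value
  obtain ⟨cval, T, hTcard, hTout⟩ :
      ∃ (cval : ℂ) (T : Finset (Fin (n + 1))), T.card + 2 ≤ n + 1 ∧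
        ∀ i ∉ T, c i = cval := by
    set A : Finset (Fin (n + 1)) := Finset.univ.filter (fun i => c i = c ⟨0, i0lt⟩) with hA'
    by_cases hAc : 2 ≤ A.card
    · refine ⟨c ⟨0, i0lt⟩, Finset.univ.filter (fun i => ¬ c i = c ⟨0, i0lt⟩), ?_, ?_⟩
      · have hsumcard := Finset.card_filter_add_card_filter_not
          (s := (Finset.univ : Finset (Fin (n + 1)))) (p := fun i => c i = c ⟨0, i0lt⟩)
        simp only [Finset.card_univ, Fintype.card_fin] at hsumcard
        rw [← hA'] at hsumcard
        omega
      · intro i hi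
        by_contra hne; exact hi (Finset.mem_filter.mpr ⟨Finset.mem_univ i, hne⟩)
    · refine ⟨-(c ⟨0, i0lt⟩), A, ?_, ?_⟩
      · omega
      · intro i hi
        rcases hdich i with h | h
        · exact absurd (Finset.mem_filter.mpr ⟨Finset.mem_univ i, h⟩) hi
        · exact h
  -- final contradiction
  set S : Finset (Fin (n + 3)) :=
    T.map emb ∪ {⟨n + 1, by omega⟩, ⟨n + 2, by omega⟩} with hS
  set g : Fin (n + 3) → ℂ := fun j =>
    if h : (j : ℕ) < n + 1 then cval * s ⟨j.1, h⟩ - b * t ⟨j.1, h⟩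
    else if j = ⟨n + 2, by omega⟩ then b else -cval with hg
  have hScard : S.card ≤ n + 1 := by
    refine (Finset.card_union_le _ _).trans ?_
    have : ({⟨n + 1, by omega⟩, ⟨n + 2, by omega⟩} : Finset (Fin (n + 3))).card ≤ 2 :=
      (Finset.card_insert_le _ _).trans (by simp)
    simp only [Finset.card_map]
    omega
  have hdisj : Disjoint (T.map emb)
      ({⟨n + 1, by omega⟩, ⟨n + 2, by omega⟩} : Finset (Fin (n + 3))) := by
    rw [Finset.disjoint_left]
    rintro x hx hx'
    obtain ⟨y, -, rfl⟩ := Finset.mem_map.mp hx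
    have hy := y.isLt
    rcases Finset.mem_insert.mp hx' with h | h
    · have hyv : (y : ℕ) = n + 1 := congrArg Fin.val h
      omega
    · have hyv : (y : ℕ) = n + 2 := congrArg Fin.val (Finset.mem_singleton.mp h)
      omega
  have hne12 : (⟨n + 1, by omega⟩ : Fin (n + 3)) ≠ ⟨n + 2, by omega⟩ := by
    intro h
    have h2 : n + 1 = n + 2 := congrArg Fin.val h
    omega
  have hgN1 : g ⟨n + 1, by omega⟩ = -cval := by
    simp only [hg]
    rw [dif_neg (show ¬ ((⟨n + 1, by omega⟩ : Fin (n + 3)) : ℕ) < n + 1 by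
      show ¬ n + 1 < n + 1; omega), if_neg hne12]
  have hgN2 : g ⟨n + 2, by omega⟩ = b := by
    simp only [hg]
    rw [dif_neg (show ¬ ((⟨n + 2, by omega⟩ : Fin (n + 3)) : ℕ) < n + 1 by
      show ¬ n + 2 < n + 1; omega)]
    simp
  have hgsum : ∑ j ∈ S, g j • H j = 0 := by
    rw [hS, Finset.sum_union hdisj, Finset.sum_map,
      Finset.sum_pair hne12, hgN1, hgN2]
    have hT : ∀ y : Fin (n + 1), g (emb y) = cval * s y - b * t y := by
      intro y
      simp only [hg]
      rw [dif_pos]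
      · exact rfl
    have hfull : ∑ y ∈ T, g (emb y) • H (emb y)
        = ∑ y, (cval * s y - b * t y) • B y := by
      rw [Finset.sum_subset (Finset.subset_univ T)]
      · exact Finset.sum_congr rfl fun y _ => by rw [hT y]
      · intro y _ hy
        rw [hT y]
        have : cval * s y - b * t y = 0 := by
          rw [← hTout y hy, mul_comm (c y) (s y), e1]
          ring
        rw [this, zero_smul]
    rw [hfull]
    have : ∑ y, (cval * s y - b * t y) • B y
        = cval • ∑ y, s y • B y - b • ∑ y, t y • B y := by
      rw [Finset.smul_sum, Finset.smul_sum, ← Finset.sum_sub_distrib]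
      refine Finset.sum_congr rfl fun y _ => ?_
      rw [sub_smul, smul_smul, smul_smul]
    rw [this, hsum1, hsum2]
    module
  have hmem : (⟨n + 2, by omega⟩ : Fin (n + 3)) ∈ S := by
    exact Finset.mem_union_right _ (Finset.mem_insert_of_mem (Finset.mem_singleton_self _))
  have := auxZero hgen S hScard g hgsum _ hmem
  rw [hgN2] at this
  exact hb0 this
end

section
/- Let l(i,τ) for 1 ≤ i ≤ q, 1 ≤ τ ≤ t be integers and let s ≥ 1. Define p₁ = 1 and recursively p_u = 2s·Σ_{τ=1}^{u−1}(max_{1≤i≤q}|l(i,τ)|·p_τ) + 1 for 2 ≤ u ≤ t, and set l_i = Σ_{τ=1}^t l(i,τ)·p_τ. Then for any indices i₁,…,i_k, j₁,…,j_k ∈ {1,…,q} with 1 ≤ k ≤ s, the equality l_{i₁}+…+l_{i_k} = l_{j₁}+…+l_{j_k} holds if and only if l(i₁,τ)+…+l(i_k,τ) = l(j₁,τ)+…+l(j_k,τ) for every 1 ≤ τ ≤ t. -/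
theorem stmt17 (q t s : ℕ) (hs : 1 ≤ s) (l : ℕ → ℕ → ℤ) (p : ℕ → ℤ)
    (hp1 : p 1 = 1)
    (hpu : ∀ u, 2 ≤ u → u ≤ t →
      p u = 2 * (s : ℤ) * (∑ τ ∈ Finset.Icc 1 (u - 1),
        (((Finset.Icc 1 q).sup (fun i => (l i τ).natAbs) : ℕ) : ℤ) * p τ) + 1) :
    ∀ k : ℕ, 1 ≤ k → k ≤ s → ∀ i j : Fin k → ℕ,
      (∀ a, i a ∈ Finset.Icc 1 q) → (∀ a, j a ∈ Finset.Icc 1 q) →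
      ((∑ a, ∑ τ ∈ Finset.Icc 1 t, l (i a) τ * p τ) =
          (∑ a, ∑ τ ∈ Finset.Icc 1 t, l (j a) τ * p τ) ↔
        ∀ τ ∈ Finset.Icc 1 t, (∑ a, l (i a) τ) = ∑ a, l (j a) τ) := by
  intro k hk hks i j hi hj
  set M : ℕ → ℤ := fun τ => (((Finset.Icc 1 q).sup (fun i => (l i τ).natAbs) : ℕ) : ℤ)
    with hMdef
  set d : ℕ → ℤ := fun τ => (∑ a, l (i a) τ) - ∑ a, l (j a) τ with hddef
  have hMnn : ∀ τ, 0 ≤ M τ := fun τ => Int.ofNat_nonneg _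
  have hbound : ∀ τ, |d τ| ≤ 2 * (s : ℤ) * M τ := by
    intro τ
    have h1 : ∀ a : ℕ, a ∈ Finset.Icc 1 q → |l a τ| ≤ M τ := by
      intro a ha
      have h0 : (l a τ).natAbs ≤ (Finset.Icc 1 q).sup (fun i => (l i τ).natAbs) :=
        Finset.le_sup (f := fun i => (l i τ).natAbs) ha
      simp only [hMdef]
      rw [Int.abs_eq_natAbs]
      exact_mod_cast h0
    have h2 : |d τ| ≤ ∑ a : Fin k, |l (i a) τ - l (j a) τ| := by
      simpa [hddef, Finset.sum_sub_distrib] using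
        Finset.abs_sum_le_sum_abs (fun a : Fin k => l (i a) τ - l (j a) τ) Finset.univ
    have h3 : ∑ a : Fin k, |l (i a) τ - l (j a) τ| ≤ ∑ _a : Fin k, 2 * M τ := by
      apply Finset.sum_le_sum
      intro a _
      calc |l (i a) τ - l (j a) τ| ≤ |l (i a) τ| + |l (j a) τ| := abs_sub _ _
        _ ≤ M τ + M τ := add_le_add (h1 _ (hi a)) (h1 _ (hj a))
        _ = 2 * M τ := by ring
    have h4 : (∑ _a : Fin k, 2 * M τ) = (k : ℤ) * (2 * M τ) := by
      simp [Finset.sum_const, mul_comm]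
    have hks' : (k : ℤ) ≤ (s : ℤ) := by exact_mod_cast hks
    nlinarith [hMnn τ, h2, h3]
  have hppos : ∀ u, 1 ≤ u → u ≤ t → 1 ≤ p u := by
    intro u
    induction u using Nat.strong_induction_on with
    | _ u ih =>
      intro h1 ht
      rcases eq_or_lt_of_le h1 with h | h
      · rw [← h]; rw [hp1]
      · rw [hpu u h ht]
        have hsum : 0 ≤ ∑ τ ∈ Finset.Icc 1 (u - 1), M τ * p τ := by
          apply Finset.sum_nonneg
          intro τ hτ
          simp only [Finset.mem_Icc] at hτ
          exact mul_nonneg (hMnn τ) (le_trans zero_le_one (ih τ (by omega) hτ.1 (by omega)))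
        have hs0 : (0:ℤ) ≤ (s:ℤ) := Int.ofNat_nonneg s
        nlinarith
  have key : ∀ u, u ≤ t → (∑ τ ∈ Finset.Icc 1 u, d τ * p τ) = 0 →
      ∀ τ ∈ Finset.Icc 1 u, d τ = 0 := by
    intro u
    induction u with
    | zero => intro _ _ τ hτ; simp at hτ
    | succ u ih =>
      intro hut hsum
      rw [Finset.sum_Icc_succ_top (by omega)] at hsum
      have hdz : d (u + 1) = 0 := by
        rcases Nat.eq_zero_or_pos u with rfl | hu
        · simp at hsum
          rw [hp1] at hsum
          simpa using hsum
        · have hp' := hpu (u + 1) (by omega) hut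
          simp only [Nat.add_sub_cancel] at hp'
          have habs : |∑ τ ∈ Finset.Icc 1 u, d τ * p τ| ≤
              2 * (s:ℤ) * ∑ τ ∈ Finset.Icc 1 u, M τ * p τ := by
            calc |∑ τ ∈ Finset.Icc 1 u, d τ * p τ|
                ≤ ∑ τ ∈ Finset.Icc 1 u, |d τ * p τ| :=
                  Finset.abs_sum_le_sum_abs _ _
              _ ≤ ∑ τ ∈ Finset.Icc 1 u, 2 * (s:ℤ) * (M τ * p τ) := by
                  apply Finset.sum_le_sum
                  intro τ hτ
                  simp only [Finset.mem_Icc] at hτ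
                  have hpτ : 1 ≤ p τ := hppos τ hτ.1 (by omega)
                  rw [abs_mul, abs_of_pos (by omega : (0:ℤ) < p τ)]
                  have := hbound τ
                  nlinarith [abs_nonneg (d τ), hMnn τ]
              _ = 2 * (s:ℤ) * ∑ τ ∈ Finset.Icc 1 u, M τ * p τ := by
                  rw [Finset.mul_sum]
          have heq : d (u+1) * p (u+1) = -(∑ τ ∈ Finset.Icc 1 u, d τ * p τ) := by
            linarith
          by_contra hne
          have h1 : 1 ≤ |d (u+1)| := by
            rcases abs_pos.mpr hne with h
            omega
          have hppos' : 0 < p (u+1) := by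
            have := hppos (u+1) (by omega) hut; omega
          have : p (u+1) ≤ |d (u+1) * p (u+1)| := by
            rw [abs_mul, abs_of_pos hppos']
            nlinarith
          rw [heq, abs_neg] at this
          linarith
      rw [hdz, zero_mul, add_zero] at hsum
      intro τ hτ
      simp only [Finset.mem_Icc] at hτ
      rcases Nat.lt_or_ge τ (u+1) with h | h
      · exact ih (by omega) hsum τ (Finset.mem_Icc.mpr ⟨hτ.1, by omega⟩)
      · have : τ = u + 1 := by omega
        rw [this]; exact hdz
  have hswap : ∀ f : Fin k → ℕ,
      (∑ a : Fin k, ∑ τ ∈ Finset.Icc 1 t, l (f a) τ * p τ) =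
      ∑ τ ∈ Finset.Icc 1 t, (∑ a : Fin k, l (f a) τ) * p τ := by
    intro f
    rw [Finset.sum_comm]
    exact Finset.sum_congr rfl fun τ _ => by rw [Finset.sum_mul]
  constructor
  · intro h
    have h0 : (∑ τ ∈ Finset.Icc 1 t, d τ * p τ) = 0 := by
      have := sub_eq_zero.mpr h
      rw [hswap i, hswap j, ← Finset.sum_sub_distrib] at this
      simpa [hddef, sub_mul] using this
    intro τ hτ
    have := key t le_rfl h0 τ hτ
    simp only [hddef] at this
    linarith
  · intro h
    rw [hswap i, hswap j]
    exact Finset.sum_congr rfl fun τ hτ => by rw [h τ hτ]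
end
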